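/- Let 0 ≤ n ≤ 7 and let d, a₁, …, aₙ be integers with 3d + Σᵢaᵢ = 0 and d² − Σᵢaᵢ² = −2. Then exactly one of the following holds: (binary) d = 0 and there are indices i ≠ j with aᵢ = 1, aⱼ = −1 and aₖ = 0 for all k ∉ {i,j}; (ternary) d = ε for some ε ∈ {1,−1}, exactly three of the aᵢ equal −ε, and the rest are 0; (senary) d = 2ε for some ε ∈ {1,−1}, exactly six of the aᵢ equal −ε, and the rest are 0. Consequently a Lagrangian sphere in 𝔻ₙ represents a class of the form Eᵢ−Eⱼ, ±(H−Eᵢ−Eⱼ−Eₖ) (possible only if n ≥ 3), or ±(2H−E_{i₁}−⋯−E_{i₆}) (possible only if n ≥ 6). -/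

import Mathlib

/-- The class `dH + Σ aᵢEᵢ` is *binary*: `d = 0` and `a` is `Eᵢ - Eⱼ` for some `i ≠ j`. -/
def IsBinaryClass (n : ℕ) (d : ℤ) (a : Fin n → ℤ) : Prop :=
  d = 0 ∧ ∃ i j : Fin n, i ≠ j ∧ a i = 1 ∧ a j = -1 ∧
    ∀ k : Fin n, k ≠ i → k ≠ j → a k = 0

/-- The class `dH + Σ aᵢEᵢ` is *ternary*: `d = ε ∈ {1,-1}`, exactly three of the `aᵢ`
equal `-ε` and the rest are `0`. -/
def IsTernaryClass (n : ℕ) (d : ℤ) (a : Fin n → ℤ) : Prop :=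
  ∃ ε : ℤ, (ε = 1 ∨ ε = -1) ∧ d = ε ∧
    (Finset.univ.filter fun i : Fin n => a i = -ε).card = 3 ∧
    ∀ i : Fin n, a i ≠ -ε → a i = 0

/-- The class `dH + Σ aᵢEᵢ` is *senary*: `d = 2ε` for `ε ∈ {1,-1}`, exactly six of the
`aᵢ` equal `-ε` and the rest are `0`. -/
def IsSenaryClass (n : ℕ) (d : ℤ) (a : Fin n → ℤ) : Prop :=
  ∃ ε : ℤ, (ε = 1 ∨ ε = -1) ∧ d = 2 * ε ∧
    (Finset.univ.filter fun i : Fin n => a i = -ε).card = 6 ∧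
    ∀ i : Fin n, a i ≠ -ε → a i = 0

lemma int_mul_add_one_nonneg (x : ℤ) : 0 ≤ x * (x + 1) := by
  rcases le_or_gt 0 x with h | h
  · exact mul_nonneg h (by linarith)
  · have h1 : (0:ℤ) ≤ -x := by linarith
    have h2 : (0:ℤ) ≤ -(x + 1) := by omega
    nlinarith

/-- If `∑ a = -ε*m` and `∑ a² = m` with `ε = ±1`, then every `aᵢ ∈ {0, -ε}` and the
number of `i` with `aᵢ = -ε` is `m`. -/
lemma aux_dichotomy {n : ℕ} (a : Fin n → ℤ) (ε m : ℤ) (hε : ε = 1 ∨ ε = -1)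
    (h1 : ∑ i, a i = -ε * m) (h2 : ∑ i, (a i) ^ 2 = m) :
    (∀ i, a i = 0 ∨ a i = -ε) ∧
      ((Finset.univ.filter fun i : Fin n => a i = -ε).card : ℤ) = m := by
  have hsum0 : ∑ i, (a i * (a i + ε)) = 0 := by
    have he : ∑ i, (a i * (a i + ε)) = (∑ i, (a i) ^ 2) + ε * ∑ i, a i := by
      rw [Finset.mul_sum, ← Finset.sum_add_distrib]
      exact Finset.sum_congr rfl fun i _ => by ring
    rw [he, h1, h2]
    rcases hε with rfl | rfl <;> ring
  have hterm : ∀ i ∈ Finset.univ, 0 ≤ a i * (a i + ε) := by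
    intro i _
    have h := int_mul_add_one_nonneg (ε * a i)
    have he : ε * a i * (ε * a i + 1) = a i * (a i + ε) := by
      rcases hε with rfl | rfl <;> ring
    linarith [he ▸ h]
  have hz := (Finset.sum_eq_zero_iff_of_nonneg hterm).1 hsum0
  have dich : ∀ i, a i = 0 ∨ a i = -ε := by
    intro i
    rcases mul_eq_zero.1 (hz i (Finset.mem_univ i)) with h | h
    · exact Or.inl h
    · exact Or.inr (by linarith)
  refine ⟨dich, ?_⟩
  have hrw : ∀ i, a i = if a i = -ε then -ε else 0 := by
    intro i
    rcases hε with rfl | rfl <;> rcases dich i with h | h <;> simp [h]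
  have hsum : ∑ i, a i = ((Finset.univ.filter fun i : Fin n => a i = -ε).card : ℤ) * (-ε) := by
    calc ∑ i, a i = ∑ i, (if a i = -ε then -ε else (0:ℤ)) :=
          Finset.sum_congr rfl fun i _ => hrw i
      _ = ∑ i ∈ Finset.univ.filter fun i : Fin n => a i = -ε, (-ε) := by
          rw [Finset.sum_filter]
      _ = _ := by rw [Finset.sum_const, nsmul_eq_mul]
  rw [h1] at hsum
  rcases hε with rfl | rfl <;> linarith

/-- For `0 ≤ n ≤ 7`, any integer class `dH + Σ aᵢEᵢ` in `H₂(𝔻ₙ;ℤ)` with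
`c₁ = 3d + Σ aᵢ = 0` and square `d² - Σ aᵢ² = -2` is of exactly one of the three kinds:
binary, ternary or senary.  Hence a Lagrangian sphere in `𝔻ₙ` represents a class of the
form `Eᵢ - Eⱼ`, `±(H - Eᵢ - Eⱼ - Eₖ)` (only if `n ≥ 3`), or `±(2H - E_{i₁} - ⋯ - E_{i₆})`
(only if `n ≥ 6`). -/
theorem lagrangian_sphere_classes_in_delPezzo (n : ℕ) (hn : n ≤ 7)
    (d : ℤ) (a : Fin n → ℤ)
    (hc1 : 3 * d + ∑ i, a i = 0)
    (hsq : d ^ 2 - ∑ i, (a i) ^ 2 = -2) :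
    (IsBinaryClass n d a ∧ ¬ IsTernaryClass n d a ∧ ¬ IsSenaryClass n d a) ∨
    (¬ IsBinaryClass n d a ∧ IsTernaryClass n d a ∧ ¬ IsSenaryClass n d a) ∨
    (¬ IsBinaryClass n d a ∧ ¬ IsTernaryClass n d a ∧ IsSenaryClass n d a) := by
  have hS : ∑ i, a i = -3 * d := by linarith
  have hQ : ∑ i, (a i) ^ 2 = d ^ 2 + 2 := by linarith
  -- Cauchy–Schwarz gives a bound on d
  have hcs : (∑ i, a i) ^ 2 ≤ ((Finset.univ : Finset (Fin n)).card : ℤ) * ∑ i, (a i) ^ 2 :=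
    sq_sum_le_card_mul_sum_sq
  have hcard : ((Finset.univ : Finset (Fin n)).card : ℤ) = (n : ℤ) := by simp
  have hd7 : d ^ 2 ≤ 7 := by
    rw [hS, hQ, hcard] at hcs
    have hn' : (n : ℤ) ≤ 7 := by exact_mod_cast hn
    nlinarith [sq_nonneg d]
  have hd2 : d ≤ 2 := by nlinarith [sq_nonneg (d - 3)]
  have hdm2 : -2 ≤ d := by nlinarith [sq_nonneg (d + 3)]
  have notB : d ≠ 0 → ¬ IsBinaryClass n d a := fun h hB => h hB.1
  have notT : d ≠ 1 → d ≠ -1 → ¬ IsTernaryClass n d a := by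
    rintro h1 h2 ⟨ε, hε, hd, -⟩; rcases hε with rfl | rfl <;> omega
  have notS : d ≠ 2 → d ≠ -2 → ¬ IsSenaryClass n d a := by
    rintro h1 h2 ⟨ε, hε, hd, -⟩; rcases hε with rfl | rfl <;> omega
  interval_cases d
  -- d = -2 : senary with ε = -1
  · refine Or.inr (Or.inr ⟨notB (by norm_num), notT (by norm_num) (by norm_num), ?_⟩)
    obtain ⟨dich, hcardm⟩ := aux_dichotomy a (-1) 6 (Or.inr rfl)
      (by rw [hS]; ring) (by rw [hQ]; ring)
    exact ⟨-1, Or.inr rfl, by norm_num, by exact_mod_cast hcardm,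
      fun i hi => (dich i).resolve_right hi⟩
  -- d = -1 : ternary with ε = -1
  · refine Or.inr (Or.inl ⟨notB (by norm_num), ?_, notS (by norm_num) (by norm_num)⟩)
    obtain ⟨dich, hcardm⟩ := aux_dichotomy a (-1) 3 (Or.inr rfl)
      (by rw [hS]; ring) (by rw [hQ]; ring)
    exact ⟨-1, Or.inr rfl, by norm_num, by exact_mod_cast hcardm,
      fun i hi => (dich i).resolve_right hi⟩
  -- d = 0 : binary
  · refine Or.inl ⟨?_, notT (by norm_num) (by norm_num), notS (by norm_num) (by norm_num)⟩
    have hS0 : ∑ i, a i = 0 := by rw [hS]; ring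
    have hQ2 : ∑ i, (a i) ^ 2 = 2 := by rw [hQ]; ring
    have hbd : ∀ i, a i = -1 ∨ a i = 0 ∨ a i = 1 := by
      intro i
      have hle : (a i) ^ 2 ≤ 2 := by
        calc (a i) ^ 2 ≤ ∑ j, (a j) ^ 2 :=
              Finset.single_le_sum (fun j _ => sq_nonneg (a j)) (Finset.mem_univ i)
          _ = 2 := hQ2
      have h1 : a i ≤ 1 := by nlinarith [sq_nonneg (a i - 1)]
      have h2 : -1 ≤ a i := by nlinarith [sq_nonneg (a i + 1)]
      omega
    have hP : ∑ i, (a i * (a i + 1)) =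
        ((Finset.univ.filter fun i : Fin n => a i = 1).card : ℤ) * 2 := by
      calc ∑ i, (a i * (a i + 1)) = ∑ i, (if a i = 1 then (2:ℤ) else 0) := by
            refine Finset.sum_congr rfl fun i _ => ?_
            rcases hbd i with h | h | h <;> simp [h]
        _ = ∑ i ∈ Finset.univ.filter fun i : Fin n => a i = 1, (2:ℤ) := by
            rw [Finset.sum_filter]
        _ = _ := by rw [Finset.sum_const, nsmul_eq_mul]
    have hN : ∑ i, (a i * (a i - 1)) =
        ((Finset.univ.filter fun i : Fin n => a i = -1).card : ℤ) * 2 := by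
      calc ∑ i, (a i * (a i - 1)) = ∑ i, (if a i = -1 then (2:ℤ) else 0) := by
            refine Finset.sum_congr rfl fun i _ => ?_
            rcases hbd i with h | h | h <;> simp [h]
        _ = ∑ i ∈ Finset.univ.filter fun i : Fin n => a i = -1, (2:ℤ) := by
            rw [Finset.sum_filter]
        _ = _ := by rw [Finset.sum_const, nsmul_eq_mul]
    have hPval : ∑ i, (a i * (a i + 1)) = 2 := by
      have he : ∑ i, (a i * (a i + 1)) = (∑ i, (a i) ^ 2) + ∑ i, a i := by
        rw [← Finset.sum_add_distrib]; exact Finset.sum_congr rfl fun i _ => by ring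
      rw [he, hS0, hQ2]; ring
    have hNval : ∑ i, (a i * (a i - 1)) = 2 := by
      have he : ∑ i, (a i * (a i - 1)) = (∑ i, (a i) ^ 2) - ∑ i, a i := by
        rw [← Finset.sum_sub_distrib]; exact Finset.sum_congr rfl fun i _ => by ring
      rw [he, hS0, hQ2]; ring
    have hPcard : (Finset.univ.filter fun i : Fin n => a i = 1).card = 1 := by
      have h := hP.symm.trans hPval; omega
    have hNcard : (Finset.univ.filter fun i : Fin n => a i = -1).card = 1 := by
      have h := hN.symm.trans hNval; omega
    obtain ⟨i, hi⟩ := Finset.card_eq_one.1 hPcard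
    obtain ⟨j, hj⟩ := Finset.card_eq_one.1 hNcard
    have hai : a i = 1 := by
      have : i ∈ Finset.univ.filter fun i : Fin n => a i = 1 := by
        rw [hi]; exact Finset.mem_singleton_self i
      exact (Finset.mem_filter.1 this).2
    have haj : a j = -1 := by
      have : j ∈ Finset.univ.filter fun i : Fin n => a i = -1 := by
        rw [hj]; exact Finset.mem_singleton_self j
      exact (Finset.mem_filter.1 this).2
    refine ⟨rfl, i, j, fun hij => by rw [hij, haj] at hai; norm_num at hai, hai, haj, ?_⟩
    intro k hki hkj
    rcases hbd k with h | h | h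
    · have hk : k ∈ Finset.univ.filter fun i : Fin n => a i = -1 :=
        Finset.mem_filter.2 ⟨Finset.mem_univ k, h⟩
      rw [hj, Finset.mem_singleton] at hk
      exact absurd hk hkj
    · exact h
    · have hk : k ∈ Finset.univ.filter fun i : Fin n => a i = 1 :=
        Finset.mem_filter.2 ⟨Finset.mem_univ k, h⟩
      rw [hi, Finset.mem_singleton] at hk
      exact absurd hk hki
  -- d = 1 : ternary with ε = 1
  · refine Or.inr (Or.inl ⟨notB (by norm_num), ?_, notS (by norm_num) (by norm_num)⟩)
    obtain ⟨dich, hcardm⟩ := aux_dichotomy a 1 3 (Or.inl rfl)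
      (by rw [hS]; ring) (by rw [hQ]; ring)
    exact ⟨1, Or.inl rfl, by norm_num, by exact_mod_cast hcardm,
      fun i hi => (dich i).resolve_right hi⟩
  -- d = 2 : senary with ε = 1
  · refine Or.inr (Or.inr ⟨notB (by norm_num), notT (by norm_num) (by norm_num), ?_⟩)
    obtain ⟨dich, hcardm⟩ := aux_dichotomy a 1 6 (Or.inl rfl)
      (by rw [hS]; ring) (by rw [hQ]; ring)
    exact ⟨1, Or.inl rfl, by norm_num, by exact_mod_cast hcardm,
      fun i hi => (dich i).resolve_right hi⟩
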